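/- arXiv:1507.06558 — 6 statements merged into one kernel-verified Lean document; each statement's English description precedes it below -/
import Mathlib

section
/- For every ℝ-linear map L : ℍ → W one has the pointwise energy identity Ω_I(L(1), L(i)) + Ω_I(L(j), L(k)) + Ω_J(L(1), L(j)) + Ω_J(L(k), L(i)) + Ω_K(L(1), L(k)) + Ω_K(L(i), L(j)) = (1/2)·‖L‖² − (1/8)·‖D_L‖², where D_L is the ℝ-linear map D_L(x) := L(x) − I(L(i·x)) − J(L(j·x)) − K(L(k·x)) and ‖D_L‖² is its squared Hilbert–Schmidt norm. (This is the flat, pointwise form of the identity expressing the Dirichlet energy density of a triholomorphic map through the Kähler forms, paper eq. (2.1)–(2.2).) -/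
open scoped Quaternion RealInnerProductSpace

/-- The quaternion unit `i`. -/
noncomputable def Quat.i : ℍ[ℝ] := ⟨0, 1, 0, 0⟩
/-- The quaternion unit `j`. -/
noncomputable def Quat.j : ℍ[ℝ] := ⟨0, 0, 1, 0⟩
/-- The quaternion unit `k`. -/
noncomputable def Quat.k : ℍ[ℝ] := ⟨0, 0, 0, 1⟩

private lemma quat_tbl :
    Quat.i * Quat.i = -1 ∧ Quat.i * Quat.j = Quat.k ∧ Quat.i * Quat.k = -Quat.j ∧
    Quat.j * Quat.i = -Quat.k ∧ Quat.j * Quat.j = -1 ∧ Quat.j * Quat.k = Quat.i ∧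
    Quat.k * Quat.i = Quat.j ∧ Quat.k * Quat.j = -Quat.i ∧ Quat.k * Quat.k = -1 := by
  refine ⟨?_, ?_, ?_, ?_, ?_, ?_, ?_, ?_, ?_⟩ <;>
    ext <;>
    simp only [Quaternion.re_mul, Quaternion.imI_mul,
      Quaternion.imJ_mul, Quaternion.imK_mul, Quaternion.re_neg, Quaternion.imI_neg,
      Quaternion.imJ_neg, Quaternion.imK_neg] <;> simp [Quat.i, Quat.j, Quat.k]

/-- the pointwise energy identity
`Ω_I(L1,Li)+Ω_I(Lj,Lk)+Ω_J(L1,Lj)+Ω_J(Lk,Li)+Ω_K(L1,Lk)+Ω_K(Li,Lj)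
  = (1/2)‖L‖² − (1/8)‖D_L‖²`. -/
theorem stmt0 {W : Type*} [NormedAddCommGroup W] [InnerProductSpace ℝ W]
    (I J K : W →ₗ[ℝ] W)
    (hIinner : ∀ v w : W, ⟪I v, I w⟫ = ⟪v, w⟫)
    (hJinner : ∀ v w : W, ⟪J v, J w⟫ = ⟪v, w⟫)
    (hKinner : ∀ v w : W, ⟪K v, K w⟫ = ⟪v, w⟫)
    (hII : I ∘ₗ I = -LinearMap.id) (hJJ : J ∘ₗ J = -LinearMap.id)
    (hKK : K ∘ₗ K = -LinearMap.id)
    (hIJ : I ∘ₗ J = K) (hJK : J ∘ₗ K = I) (hKI : K ∘ₗ I = J)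
    (L D : ℍ[ℝ] →ₗ[ℝ] W)
    (hD : ∀ x : ℍ[ℝ],
      D x = L x - I (L (Quat.i * x)) - J (L (Quat.j * x)) - K (L (Quat.k * x))) :
    ⟪L 1, I (L Quat.i)⟫ + ⟪L Quat.j, I (L Quat.k)⟫
      + ⟪L 1, J (L Quat.j)⟫ + ⟪L Quat.k, J (L Quat.i)⟫
      + ⟪L 1, K (L Quat.k)⟫ + ⟪L Quat.i, K (L Quat.j)⟫
      = (1 / 2) * (‖L 1‖ ^ 2 + ‖L Quat.i‖ ^ 2 + ‖L Quat.j‖ ^ 2 + ‖L Quat.k‖ ^ 2)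
        - (1 / 8) * (‖D 1‖ ^ 2 + ‖D Quat.i‖ ^ 2 + ‖D Quat.j‖ ^ 2 + ‖D Quat.k‖ ^ 2) := by
  obtain ⟨hii, hij, hik, hji, hjj, hjk, hki, hkj, hkk⟩ := quat_tbl
  -- pointwise versions of the composition identities
  have pII : ∀ v, I (I v) = -v := fun v => by
    have := LinearMap.congr_fun hII v; simpa using this
  have pJJ : ∀ v, J (J v) = -v := fun v => by
    have := LinearMap.congr_fun hJJ v; simpa using this
  have pKK : ∀ v, K (K v) = -v := fun v => by
    have := LinearMap.congr_fun hKK v; simpa using this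
  have pIJ : ∀ v, I (J v) = K v := fun v => LinearMap.congr_fun hIJ v
  have pJK : ∀ v, J (K v) = I v := fun v => LinearMap.congr_fun hJK v
  have pKI : ∀ v, K (I v) = J v := fun v => LinearMap.congr_fun hKI v
  have pJI : ∀ v, J (I v) = -K v := fun v => by
    have h := congrArg J (pJK v); rw [pJJ] at h; exact h.symm
  have pKJ : ∀ v, K (J v) = -I v := fun v => by
    have h := congrArg K (pKI v); rw [pKK] at h; exact h.symm
  have pIK : ∀ v, I (K v) = -J v := fun v => by
    have h := congrArg I (pIJ v); rw [pII] at h; exact h.symm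
  -- skew-adjointness
  have sI : ∀ v w : W, ⟪I v, w⟫ = -⟪v, I w⟫ := fun v w => by
    have := hIinner (I v) w
    rw [pII] at this
    simpa [inner_neg_left] using this.symm
  have sJ : ∀ v w : W, ⟪J v, w⟫ = -⟪v, J w⟫ := fun v w => by
    have := hJinner (J v) w
    rw [pJJ] at this
    simpa [inner_neg_left] using this.symm
  have sK : ∀ v w : W, ⟪K v, w⟫ = -⟪v, K w⟫ := fun v w => by
    have := hKinner (K v) w
    rw [pKK] at this
    simpa [inner_neg_left] using this.symm
  set a := L 1 with ha
  set b := L Quat.i with hb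
  set c := L Quat.j with hc
  set d := L Quat.k with hd
  -- values of D
  have hD1 : D 1 = a - I b - J c - K d := by
    rw [hD 1]; simp; rfl
  have hDi : D Quat.i = b + I a + J d - K c := by
    rw [hD Quat.i, hii, hji, hki]
    simp only [map_neg, map_one, ← ha, ← hb, ← hc, ← hd]
    abel
  have hDj : D Quat.j = c - I d + J a + K b := by
    rw [hD Quat.j, hij, hjj, hkj]
    simp only [map_neg, map_one, ← ha, ← hb, ← hc, ← hd]
    abel
  have hDk : D Quat.k = d + I c - J b + K a := by
    rw [hD Quat.k, hik, hjk, hkk]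
    simp only [map_neg, map_one, ← ha, ← hb, ← hc, ← hd]
    abel
  -- abbreviations for the six symplectic pairings
  have expand : ∀ x : W, ‖x‖ ^ 2 = ⟪x, x⟫ := fun x => (real_inner_self_eq_norm_sq x).symm
  rw [expand (D 1), expand (D Quat.i), expand (D Quat.j), expand (D Quat.k),
    hD1, hDi, hDj, hDk, expand a, expand b, expand c, expand d]
  simp only [inner_sub_left, inner_sub_right, inner_add_left, inner_add_right,
    hIinner, hJinner, hKinner]
  simp only [sI, sJ, sK, pII, pJJ, pKK, pIJ, pJK, pKI, pJI, pKJ, pIK,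
    inner_neg_left, inner_neg_right]
  have e1 : ⟪b, I a⟫ = -⟪a, I b⟫ := by rw [real_inner_comm, sI]
  have e2 : ⟪c, J a⟫ = -⟪a, J c⟫ := by rw [real_inner_comm, sJ]
  have e3 : ⟪d, K a⟫ = -⟪a, K d⟫ := by rw [real_inner_comm, sK]
  have e4 : ⟪c, K b⟫ = -⟪b, K c⟫ := by rw [real_inner_comm, sK]
  have e5 : ⟪d, I c⟫ = -⟪c, I d⟫ := by rw [real_inner_comm, sI]
  have e6 : ⟪b, J d⟫ = -⟪d, J b⟫ := by rw [real_inner_comm, sJ]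
  rw [e1, e2, e3, e4, e5, e6]
  ring
end

section
/- For every ℝ-linear map L : ℍ → W one has Ω_I(L(1), L(i)) + Ω_I(L(j), L(k)) + Ω_J(L(1), L(j)) + Ω_J(L(k), L(i)) + Ω_K(L(1), L(k)) + Ω_K(L(i), L(j)) ≤ (1/2)·‖L‖², with equality if and only if L is triholomorphic, i.e. L(x) = I(L(i·x)) + J(L(j·x)) + K(L(k·x)) for all x ∈ ℍ. (Pointwise 'null Lagrangian' inequality underlying the calibrated nature of triholomorphic maps.) -/
open scoped Quaternion RealInnerProductSpace

/-- the pointwise null-Lagrangian inequality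
`Ω_I(L1,Li)+Ω_I(Lj,Lk)+Ω_J(L1,Lj)+Ω_J(Lk,Li)+Ω_K(L1,Lk)+Ω_K(Li,Lj) ≤ (1/2)‖L‖²`,
with equality if and only if `L` is triholomorphic. -/
theorem stmt1 {W : Type*} [NormedAddCommGroup W] [InnerProductSpace ℝ W]
    (I J K : W →ₗ[ℝ] W)
    (hIinner : ∀ v w : W, ⟪I v, I w⟫ = ⟪v, w⟫)
    (hJinner : ∀ v w : W, ⟪J v, J w⟫ = ⟪v, w⟫)
    (hKinner : ∀ v w : W, ⟪K v, K w⟫ = ⟪v, w⟫)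
    (hII : I ∘ₗ I = -LinearMap.id) (hJJ : J ∘ₗ J = -LinearMap.id)
    (hKK : K ∘ₗ K = -LinearMap.id)
    (hIJ : I ∘ₗ J = K) (hJK : J ∘ₗ K = I) (hKI : K ∘ₗ I = J)
    (L : ℍ[ℝ] →ₗ[ℝ] W) :
    (⟪L 1, I (L Quat.i)⟫ + ⟪L Quat.j, I (L Quat.k)⟫
        + ⟪L 1, J (L Quat.j)⟫ + ⟪L Quat.k, J (L Quat.i)⟫
        + ⟪L 1, K (L Quat.k)⟫ + ⟪L Quat.i, K (L Quat.j)⟫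
      ≤ (1 / 2) * (‖L 1‖ ^ 2 + ‖L Quat.i‖ ^ 2 + ‖L Quat.j‖ ^ 2 + ‖L Quat.k‖ ^ 2))
    ∧ ((⟪L 1, I (L Quat.i)⟫ + ⟪L Quat.j, I (L Quat.k)⟫
        + ⟪L 1, J (L Quat.j)⟫ + ⟪L Quat.k, J (L Quat.i)⟫
        + ⟪L 1, K (L Quat.k)⟫ + ⟪L Quat.i, K (L Quat.j)⟫
      = (1 / 2) * (‖L 1‖ ^ 2 + ‖L Quat.i‖ ^ 2 + ‖L Quat.j‖ ^ 2 + ‖L Quat.k‖ ^ 2))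
      ↔ ∀ x : ℍ[ℝ],
          L x = I (L (Quat.i * x)) + J (L (Quat.j * x)) + K (L (Quat.k * x))) := by
  -- pointwise composition facts
  have pII : ∀ v, I (I v) = -v := fun v => by
    simpa using LinearMap.congr_fun hII v
  have pJJ : ∀ v, J (J v) = -v := fun v => by
    simpa using LinearMap.congr_fun hJJ v
  have pKK : ∀ v, K (K v) = -v := fun v => by
    simpa using LinearMap.congr_fun hKK v
  have pIJ : ∀ v, I (J v) = K v := fun v => LinearMap.congr_fun hIJ v
  have pJK : ∀ v, J (K v) = I v := fun v => LinearMap.congr_fun hJK v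
  have pKI : ∀ v, K (I v) = J v := fun v => LinearMap.congr_fun hKI v
  have pJI : ∀ v, J (I v) = -K v := fun v => by rw [← pJK v, pJJ]
  have pIK : ∀ v, I (K v) = -J v := fun v => by rw [← pIJ v, pII]
  have pKJ : ∀ v, K (J v) = -I v := fun v => by rw [← pKI v, pKK]
  -- adjoint facts
  have hIadj : ∀ v w : W, ⟪I v, w⟫ = -⟪v, I w⟫ := fun v w => by
    have h := hIinner v (I w)
    rw [pII, inner_neg_right] at h; linarith
  have hJadj : ∀ v w : W, ⟪J v, w⟫ = -⟪v, J w⟫ := fun v w => by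
    have h := hJinner v (J w)
    rw [pJJ, inner_neg_right] at h; linarith
  have hKadj : ∀ v w : W, ⟪K v, w⟫ = -⟪v, K w⟫ := fun v w => by
    have h := hKinner v (K w)
    rw [pKK, inner_neg_right] at h; linarith
  set a := L 1 with ha
  set b := L Quat.i with hb
  set c := L Quat.j with hc
  set d := L Quat.k with hd
  set E := a - I b - J c - K d with hEdef
  -- the key identity
  have hE : ⟪E, E⟫ = (‖a‖ ^ 2 + ‖b‖ ^ 2 + ‖c‖ ^ 2 + ‖d‖ ^ 2)
      - 2 * (⟪a, I b⟫ + ⟪c, I d⟫ + ⟪a, J c⟫ + ⟪d, J b⟫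
        + ⟪a, K d⟫ + ⟪b, K c⟫) := by
    have n0 : ⟪a, a⟫ = ‖a‖ ^ 2 := real_inner_self_eq_norm_sq a
    have n1 : ⟪I b, I b⟫ = ‖b‖ ^ 2 := by rw [hIinner]; exact real_inner_self_eq_norm_sq b
    have n2 : ⟪J c, J c⟫ = ‖c‖ ^ 2 := by rw [hJinner]; exact real_inner_self_eq_norm_sq c
    have n3 : ⟪K d, K d⟫ = ‖d‖ ^ 2 := by rw [hKinner]; exact real_inner_self_eq_norm_sq d
    have s1 : ⟪I b, a⟫ = ⟪a, I b⟫ := real_inner_comm _ _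
    have s2 : ⟪J c, a⟫ = ⟪a, J c⟫ := real_inner_comm _ _
    have s3 : ⟪K d, a⟫ = ⟪a, K d⟫ := real_inner_comm _ _
    have f1 : ⟪I b, J c⟫ = -⟪b, K c⟫ := by rw [hIadj, pIJ]
    have f2 : ⟪J c, I b⟫ = -⟪b, K c⟫ := by rw [real_inner_comm]; exact f1
    have f3 : ⟪I b, K d⟫ = -⟪d, J b⟫ := by
      rw [hIadj, pIK, inner_neg_right, neg_neg, real_inner_comm, hJadj]
    have f4 : ⟪K d, I b⟫ = -⟪d, J b⟫ := by rw [real_inner_comm]; exact f3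
    have f5 : ⟪J c, K d⟫ = -⟪c, I d⟫ := by rw [hJadj, pJK]
    have f6 : ⟪K d, J c⟫ = -⟪c, I d⟫ := by rw [real_inner_comm]; exact f5
    simp only [hEdef, inner_sub_left, inner_sub_right]
    linarith
  have hEnn : (0:ℝ) ≤ ⟪E, E⟫ := real_inner_self_nonneg
  constructor
  · linarith
  · -- equality iff triholomorphic
    -- the defect linear map
    set M : ℍ[ℝ] →ₗ[ℝ] W :=
      L - (I ∘ₗ (L ∘ₗ LinearMap.mulLeft ℝ Quat.i) + J ∘ₗ (L ∘ₗ LinearMap.mulLeft ℝ Quat.j)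
        + K ∘ₗ (L ∘ₗ LinearMap.mulLeft ℝ Quat.k)) with hMdef
    have hMapp : ∀ x, M x = L x
        - (I (L (Quat.i * x)) + J (L (Quat.j * x)) + K (L (Quat.k * x))) := fun x => by
      simp [hMdef]
    -- quaternion products
    have mii : Quat.i * Quat.i = -1 := by ext <;> simp <;> simp [Quat.i]
    have mjj : Quat.j * Quat.j = -1 := by ext <;> simp <;> simp [Quat.j]
    have mkk : Quat.k * Quat.k = -1 := by ext <;> simp <;> simp [Quat.k]
    have mij : Quat.i * Quat.j = Quat.k := by ext <;> simp <;> simp [Quat.i, Quat.j, Quat.k]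
    have mji : Quat.j * Quat.i = -Quat.k := by ext <;> simp <;> simp [Quat.i, Quat.j, Quat.k]
    have mjk : Quat.j * Quat.k = Quat.i := by ext <;> simp <;> simp [Quat.i, Quat.j, Quat.k]
    have mkj : Quat.k * Quat.j = -Quat.i := by ext <;> simp <;> simp [Quat.i, Quat.j, Quat.k]
    have mki : Quat.k * Quat.i = Quat.j := by ext <;> simp <;> simp [Quat.i, Quat.j, Quat.k]
    have mik : Quat.i * Quat.k = -Quat.j := by ext <;> simp <;> simp [Quat.i, Quat.j, Quat.k]
    -- values of M on the basis
    have M1 : M 1 = E := by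
      rw [hMapp, mul_one, mul_one, mul_one, hEdef]; abel
    have Mi : M Quat.i = I E := by
      rw [hMapp, mii, mji, mki, hEdef]
      simp only [map_sub, map_neg, pII, pIJ, pIK]
      abel
    have Mj : M Quat.j = J E := by
      rw [hMapp, mij, mjj, mkj, hEdef]
      simp only [map_sub, map_neg, pJI, pJJ, pJK]
      abel
    have Mk : M Quat.k = K E := by
      rw [hMapp, mik, mjk, mkk, hEdef]
      simp only [map_sub, map_neg, pKI, pKJ, pKK]
      abel
    constructor
    · intro heq
      have hE0 : E = 0 := by
        have : ⟪E, E⟫ = 0 := by linarith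
        exact inner_self_eq_zero.mp this
      intro x
      have hx : x = x.re • (1:ℍ[ℝ]) + x.imI • Quat.i + x.imJ • Quat.j + x.imK • Quat.k := by
        ext <;> simp <;> simp [Quat.i, Quat.j, Quat.k]
      have hMx : M x = 0 := by
        calc M x = M (x.re • (1:ℍ[ℝ]) + x.imI • Quat.i + x.imJ • Quat.j + x.imK • Quat.k) := by
              rw [← hx]
          _ = x.re • M 1 + x.imI • M Quat.i + x.imJ • M Quat.j + x.imK • M Quat.k := by
              simp [map_add, map_smul]
          _ = 0 := by rw [M1, Mi, Mj, Mk, hE0]; simp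
      have h2 := hMapp x
      rw [hMx] at h2
      exact (sub_eq_zero.mp h2.symm)
    · intro h
      have h1 := h 1
      rw [mul_one, mul_one, mul_one] at h1
      have hE0 : E = 0 := by
        rw [hEdef, show a = I b + J c + K d from h1]; abel
      rw [hE0, inner_zero_left] at hE
      linarith
end

section
/- Let a, b, c ∈ ℝ with a² + b² + c² = 1, let q := a·i + b·j + c·k ∈ ℍ act by left multiplication, and let Q := a·I + b·J + c·K on W. If an ℝ-linear map L : ℍ → W is triholomorphic (L(x) = I(L(i·x)) + J(L(j·x)) + K(L(k·x)) for all x ∈ ℍ) and there exists v ≠ 0 in ℍ with L(v) = 0 and L(q·v) = 0, then L(q·x) = −Q(L(x)) for all x ∈ ℍ. (The 'short computation' in the proof of the bubble-holomorphicity proposition: a triholomorphic map annihilating a q-invariant 2-plane is (q, −Q)-holomorphic.) -/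
open scoped Quaternion RealInnerProductSpace

set_option maxHeartbeats 1000000

/-- a triholomorphic linear map `L : ℍ → W` annihilating a `q`-invariant
`2`-plane (i.e. `L v = 0` and `L (q·v) = 0` for some `v ≠ 0`) is `(q, −Q)`-holomorphic,
where `q = a i + b j + c k` and `Q = a I + b J + c K` with `a² + b² + c² = 1`. -/
theorem stmt4 {W : Type*} [NormedAddCommGroup W] [InnerProductSpace ℝ W]
    (I J K : W →ₗ[ℝ] W)
    (hIinner : ∀ v w : W, ⟪I v, I w⟫ = ⟪v, w⟫)
    (hJinner : ∀ v w : W, ⟪J v, J w⟫ = ⟪v, w⟫)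
    (hKinner : ∀ v w : W, ⟪K v, K w⟫ = ⟪v, w⟫)
    (hII : I ∘ₗ I = -LinearMap.id) (hJJ : J ∘ₗ J = -LinearMap.id)
    (hKK : K ∘ₗ K = -LinearMap.id)
    (hIJ : I ∘ₗ J = K) (hJK : J ∘ₗ K = I) (hKI : K ∘ₗ I = J)
    (a b c : ℝ) (habc : a ^ 2 + b ^ 2 + c ^ 2 = 1)
    (L : ℍ[ℝ] →ₗ[ℝ] W)
    (htri : ∀ x : ℍ[ℝ],
      L x = I (L (Quat.i * x)) + J (L (Quat.j * x)) + K (L (Quat.k * x)))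
    (v : ℍ[ℝ]) (hv : v ≠ 0) (hLv : L v = 0)
    (hLqv : L ((a • Quat.i + b • Quat.j + c • Quat.k) * v) = 0) :
    ∀ x : ℍ[ℝ],
      L ((a • Quat.i + b • Quat.j + c • Quat.k) * x)
        = -((a • I + b • J + c • K) (L x)) := by
  set q : ℍ[ℝ] := a • Quat.i + b • Quat.j + c • Quat.k with hq
  -- pointwise versions of the composition identities
  have hII' : ∀ x, I (I x) = -x := fun x => by
    simpa using LinearMap.congr_fun hII x
  have hJJ' : ∀ x, J (J x) = -x := fun x => by
    simpa using LinearMap.congr_fun hJJ x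
  have hKK' : ∀ x, K (K x) = -x := fun x => by
    simpa using LinearMap.congr_fun hKK x
  have hIJ' : ∀ x, I (J x) = K x := fun x => LinearMap.congr_fun hIJ x
  have hJK' : ∀ x, J (K x) = I x := fun x => LinearMap.congr_fun hJK x
  have hKI' : ∀ x, K (I x) = J x := fun x => LinearMap.congr_fun hKI x
  have hIK' : ∀ x, I (K x) = -(J x) := fun x => by
    rw [← hIJ' x, hII']
  have hJI' : ∀ x, J (I x) = -(K x) := fun x => by
    rw [← hJK' x, hJJ']
  have hKJ' : ∀ x, K (J x) = -(I x) := fun x => by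
    rw [← hKI' x, hKK']
  have Qap : ∀ z : W, (a • I + b • J + c • K) z = a • I z + b • J z + c • K z := by
    intro z; simp
  -- quaternion arithmetic
  have hbasis : ∀ x : ℍ[ℝ],
      x = x.re • (1:ℍ[ℝ]) + x.imI • Quat.i + x.imJ • Quat.j + x.imK • Quat.k := by
    intro x; ext <;> simp <;> simp [Quat.i, Quat.j, Quat.k]
  have hqe : q = a • Quat.i + b • Quat.j + c • Quat.k := hq
  have hqi : q * Quat.i = -a • (1:ℍ[ℝ]) + c • Quat.j + -b • Quat.k := by
    rw [hq]; ext <;> simp <;> simp [Quat.i, Quat.j, Quat.k]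
  have hqj : q * Quat.j = -b • (1:ℍ[ℝ]) + -c • Quat.i + a • Quat.k := by
    rw [hq]; ext <;> simp <;> simp [Quat.i, Quat.j, Quat.k]
  have hqk : q * Quat.k = -c • (1:ℍ[ℝ]) + b • Quat.i + -a • Quat.j := by
    rw [hq]; ext <;> simp <;> simp [Quat.i, Quat.j, Quat.k]
  -- the single triholomorphicity relation on the basis
  have h1 : L 1 = I (L Quat.i) + J (L Quat.j) + K (L Quat.k) := by
    simpa [mul_one] using htri 1
  have hLq : L q = a • L Quat.i + b • L Quat.j + c • L Quat.k := by
    rw [hq]; simp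
  set u : W := L q + (a • I (L 1) + b • J (L 1) + c • K (L 1)) with hu
  have hT1 : L (q * 1) + (a • I (L 1) + b • J (L 1) + c • K (L 1)) = u := by
    rw [mul_one, hu]
  have hTi : L (q * Quat.i)
      + (a • I (L Quat.i) + b • J (L Quat.i) + c • K (L Quat.i)) = I u := by
    rw [hqi, hu, hLq]
    simp only [map_add, map_smul, map_neg, h1, hII', hJJ', hKK', hIJ', hJK', hKI',
      hIK', hJI', hKJ', smul_neg, neg_neg]
    module
  have hTj : L (q * Quat.j)
      + (a • I (L Quat.j) + b • J (L Quat.j) + c • K (L Quat.j)) = J u := by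
    rw [hqj, hu, hLq]
    simp only [map_add, map_smul, map_neg, h1, hII', hJJ', hKK', hIJ', hJK', hKI',
      hIK', hJI', hKJ', smul_neg, neg_neg]
    module
  have hTk : L (q * Quat.k)
      + (a • I (L Quat.k) + b • J (L Quat.k) + c • K (L Quat.k)) = K u := by
    rw [hqk, hu, hLq]
    simp only [map_add, map_smul, map_neg, h1, hII', hJJ', hKK', hIJ', hJK', hKI',
      hIK', hJI', hKJ', smul_neg, neg_neg]
    module
  -- general formula
  have hT : ∀ x : ℍ[ℝ], L (q * x) + (a • I (L x) + b • J (L x) + c • K (L x))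
      = x.re • u + x.imI • I u + x.imJ • J u + x.imK • K u := by
    intro x
    rw [← hTi, ← hTj, ← hTk, ← hT1]
    conv_lhs => rw [hbasis x]
    simp only [mul_add, mul_smul_comm, map_add, map_smul, smul_add]
    module
  have hTv : v.re • u + v.imI • I u + v.imJ • J u + v.imK • K u = 0 := by
    rw [← hT v, hLv, hLqv]
    simp
  have key : (v.re ^ 2 + v.imI ^ 2 + v.imJ ^ 2 + v.imK ^ 2) • u = 0 := by
    have h6 : v.re • (v.re • u + v.imI • I u + v.imJ • J u + v.imK • K u)
        - v.imI • I (v.re • u + v.imI • I u + v.imJ • J u + v.imK • K u)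
        - v.imJ • J (v.re • u + v.imI • I u + v.imJ • J u + v.imK • K u)
        - v.imK • K (v.re • u + v.imI • I u + v.imJ • J u + v.imK • K u) = 0 := by
      rw [hTv]; simp
    rw [← h6]
    simp only [map_add, map_smul, hII', hJJ', hKK', hIJ', hJK', hKI', hIK', hJI', hKJ',
      smul_neg, neg_neg, smul_add, smul_smul]
    module
  have hcoef : v.re ^ 2 + v.imI ^ 2 + v.imJ ^ 2 + v.imK ^ 2 ≠ 0 := by
    intro h
    apply hv
    ext <;> simp <;>
      nlinarith [sq_nonneg v.re, sq_nonneg v.imI, sq_nonneg v.imJ, sq_nonneg v.imK]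
  have hu0 : u = 0 := by
    rcases smul_eq_zero.mp key with h | h
    · exact absurd h hcoef
    · exact h
  intro x
  have hx := hT x
  rw [hu0] at hx
  simp only [smul_zero, map_zero, add_zero] at hx
  rw [Qap]
  exact eq_neg_of_add_eq_zero_left hx
end

section
/- Let U ⊆ ℍ^m ≅ ℝ^{4m} be open, let E be a finite-dimensional real vector space, let I, J, K : E → E be arbitrary ℝ-linear maps, and let u : U → E be a C² map such that at every x ∈ U the differential satisfies du_x(y) = I(du_x(i·y)) + J(du_x(j·y)) + K(du_x(k·y)) for all y ∈ ℍ^m, where i, j, k act on ℍ^m by componentwise left quaternion multiplication. Then u is harmonic on U: Σ_{ℓ=1}^{4m} ∂²u/∂x_ℓ² = 0 in U, where the second derivatives are taken along the standard orthonormal coordinates of ℝ^{4m}. (The constant-coefficient case of the Jacobian-structure computation for Δ u: the second order terms cancel by skew-symmetry.) -/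
open scoped Quaternion

/-- The quaternion units `1, i, j, k` as a function on `Fin 4`. -/
noncomputable def quatUnit : Fin 4 → ℍ[ℝ] :=
  ![1, ⟨0, 1, 0, 0⟩, ⟨0, 0, 1, 0⟩, ⟨0, 0, 0, 1⟩]

/-- The standard basis vector of `ℍ^m` with the quaternion unit `quatUnit t` in slot `n`. -/
noncomputable def stdBasisQ (m : ℕ) (n : Fin m) (t : Fin 4) : Fin m → ℍ[ℝ] :=
  Pi.single n (quatUnit t)

lemma single_mul_aux {m : ℕ} (q r : ℍ[ℝ]) (n : Fin m) :
    (fun k => q * (Pi.single n r : Fin m → ℍ[ℝ]) k) = Pi.single n (q * r) := by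
  funext k
  rcases eq_or_ne k n with h | h
  · subst h; simp
  · simp [Pi.single_eq_of_ne h]

lemma single_neg_aux {m : ℕ} (r : ℍ[ℝ]) (n : Fin m) :
    (Pi.single n (-r) : Fin m → ℍ[ℝ]) = -Pi.single n r := by
  funext k
  rcases eq_or_ne k n with h | h
  · subst h; simp
  · simp [Pi.single_eq_of_ne h]

lemma qi0 : Quat.i * quatUnit 0 = quatUnit 1 := by apply Quaternion.ext <;> simp only [Quaternion.re_mul, Quaternion.imI_mul, Quaternion.imJ_mul, Quaternion.imK_mul, Quaternion.re_neg, Quaternion.imI_neg, Quaternion.imJ_neg, Quaternion.imK_neg] <;> simp [Quat.i, quatUnit]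
lemma qi1 : Quat.i * quatUnit 1 = -quatUnit 0 := by apply Quaternion.ext <;> simp only [Quaternion.re_mul, Quaternion.imI_mul, Quaternion.imJ_mul, Quaternion.imK_mul, Quaternion.re_neg, Quaternion.imI_neg, Quaternion.imJ_neg, Quaternion.imK_neg] <;> simp [Quat.i, quatUnit]
lemma qi2 : Quat.i * quatUnit 2 = quatUnit 3 := by apply Quaternion.ext <;> simp only [Quaternion.re_mul, Quaternion.imI_mul, Quaternion.imJ_mul, Quaternion.imK_mul, Quaternion.re_neg, Quaternion.imI_neg, Quaternion.imJ_neg, Quaternion.imK_neg] <;> simp [Quat.i, quatUnit]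
lemma qi3 : Quat.i * quatUnit 3 = -quatUnit 2 := by apply Quaternion.ext <;> simp only [Quaternion.re_mul, Quaternion.imI_mul, Quaternion.imJ_mul, Quaternion.imK_mul, Quaternion.re_neg, Quaternion.imI_neg, Quaternion.imJ_neg, Quaternion.imK_neg] <;> simp [Quat.i, quatUnit]
lemma qj0 : Quat.j * quatUnit 0 = quatUnit 2 := by apply Quaternion.ext <;> simp only [Quaternion.re_mul, Quaternion.imI_mul, Quaternion.imJ_mul, Quaternion.imK_mul, Quaternion.re_neg, Quaternion.imI_neg, Quaternion.imJ_neg, Quaternion.imK_neg] <;> simp [Quat.j, quatUnit]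
lemma qj1 : Quat.j * quatUnit 1 = -quatUnit 3 := by apply Quaternion.ext <;> simp only [Quaternion.re_mul, Quaternion.imI_mul, Quaternion.imJ_mul, Quaternion.imK_mul, Quaternion.re_neg, Quaternion.imI_neg, Quaternion.imJ_neg, Quaternion.imK_neg] <;> simp [Quat.j, quatUnit]
lemma qj2 : Quat.j * quatUnit 2 = -quatUnit 0 := by apply Quaternion.ext <;> simp only [Quaternion.re_mul, Quaternion.imI_mul, Quaternion.imJ_mul, Quaternion.imK_mul, Quaternion.re_neg, Quaternion.imI_neg, Quaternion.imJ_neg, Quaternion.imK_neg] <;> simp [Quat.j, quatUnit]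
lemma qj3 : Quat.j * quatUnit 3 = quatUnit 1 := by apply Quaternion.ext <;> simp only [Quaternion.re_mul, Quaternion.imI_mul, Quaternion.imJ_mul, Quaternion.imK_mul, Quaternion.re_neg, Quaternion.imI_neg, Quaternion.imJ_neg, Quaternion.imK_neg] <;> simp [Quat.j, quatUnit]
lemma qk0 : Quat.k * quatUnit 0 = quatUnit 3 := by apply Quaternion.ext <;> simp only [Quaternion.re_mul, Quaternion.imI_mul, Quaternion.imJ_mul, Quaternion.imK_mul, Quaternion.re_neg, Quaternion.imI_neg, Quaternion.imJ_neg, Quaternion.imK_neg] <;> simp [Quat.k, quatUnit]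
lemma qk1 : Quat.k * quatUnit 1 = quatUnit 2 := by apply Quaternion.ext <;> simp only [Quaternion.re_mul, Quaternion.imI_mul, Quaternion.imJ_mul, Quaternion.imK_mul, Quaternion.re_neg, Quaternion.imI_neg, Quaternion.imJ_neg, Quaternion.imK_neg] <;> simp [Quat.k, quatUnit]
lemma qk2 : Quat.k * quatUnit 2 = -quatUnit 1 := by apply Quaternion.ext <;> simp only [Quaternion.re_mul, Quaternion.imI_mul, Quaternion.imJ_mul, Quaternion.imK_mul, Quaternion.re_neg, Quaternion.imI_neg, Quaternion.imJ_neg, Quaternion.imK_neg] <;> simp [Quat.k, quatUnit]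
lemma qk3 : Quat.k * quatUnit 3 = -quatUnit 0 := by apply Quaternion.ext <;> simp only [Quaternion.re_mul, Quaternion.imI_mul, Quaternion.imJ_mul, Quaternion.imK_mul, Quaternion.re_neg, Quaternion.imI_neg, Quaternion.imJ_neg, Quaternion.imK_neg] <;> simp [Quat.k, quatUnit]

/-- a `C²` map `u : U ⊆ ℍ^m → E` whose differential is triholomorphic at every
point of the open set `U` (for arbitrary linear maps `I, J, K` on `E`) is harmonic on `U`:
the sum of its pure second derivatives along the standard orthonormal coordinates vanishes. -/
theorem stmt6 {m : ℕ} {E : Type*} [NormedAddCommGroup E] [NormedSpace ℝ E]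
    [FiniteDimensional ℝ E]
    (I J K : E →ₗ[ℝ] E)
    (U : Set (Fin m → ℍ[ℝ])) (hU : IsOpen U)
    (u : (Fin m → ℍ[ℝ]) → E)
    (hu : ContDiffOn ℝ 2 u U)
    (htri : ∀ x ∈ U, ∀ y : Fin m → ℍ[ℝ],
      fderiv ℝ u x y
        = I (fderiv ℝ u x (fun n => Quat.i * y n))
          + J (fderiv ℝ u x (fun n => Quat.j * y n))
          + K (fderiv ℝ u x (fun n => Quat.k * y n))) :
    ∀ x ∈ U,
      (∑ n : Fin m, ∑ t : Fin 4,
        fderiv ℝ (fun z => fderiv ℝ u z (stdBasisQ m n t)) x (stdBasisQ m n t)) = 0 := by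
  intro x hx
  have hxat : ContDiffAt ℝ 2 u x := (hu x hx).contDiffAt (hU.mem_nhds hx)
  have hsymm : IsSymmSndFDerivAt ℝ u x := hxat.isSymmSndFDerivAt (by simp)
  have hF : DifferentiableAt ℝ (fderiv ℝ u) x := by
    have : ContDiffAt ℝ 1 (fderiv ℝ u) x := hxat.fderiv_right (by norm_num)
    exact this.differentiableAt one_ne_zero
  set S : (Fin m → ℍ[ℝ]) →L[ℝ] (Fin m → ℍ[ℝ]) →L[ℝ] E := fderiv ℝ (fderiv ℝ u) x with hS
  have happly : ∀ y : Fin m → ℍ[ℝ],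
      HasFDerivAt (fun z => fderiv ℝ u z y)
        ((ContinuousLinearMap.apply ℝ E y).comp S) x := fun y =>
    (ContinuousLinearMap.apply ℝ E y).hasFDerivAt.comp x hF.hasFDerivAt
  have hkey : ∀ y w : Fin m → ℍ[ℝ],
      S w y = I (S w (fun n => Quat.i * y n)) + J (S w (fun n => Quat.j * y n))
        + K (S w (fun n => Quat.k * y n)) := by
    intro y w
    set Li : Fin m → ℍ[ℝ] := fun n => Quat.i * y n
    set Lj : Fin m → ℍ[ℝ] := fun n => Quat.j * y n
    set Lk : Fin m → ℍ[ℝ] := fun n => Quat.k * y n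
    have hg : HasFDerivAt
        (fun z => I (fderiv ℝ u z Li) + J (fderiv ℝ u z Lj) + K (fderiv ℝ u z Lk))
        ((LinearMap.toContinuousLinearMap I).comp ((ContinuousLinearMap.apply ℝ E Li).comp S)
          + (LinearMap.toContinuousLinearMap J).comp ((ContinuousLinearMap.apply ℝ E Lj).comp S)
          + (LinearMap.toContinuousLinearMap K).comp ((ContinuousLinearMap.apply ℝ E Lk).comp S))
        x := by
      exact (((LinearMap.toContinuousLinearMap I).hasFDerivAt.comp x (happly Li)).add
        ((LinearMap.toContinuousLinearMap J).hasFDerivAt.comp x (happly Lj))).add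
        ((LinearMap.toContinuousLinearMap K).hasFDerivAt.comp x (happly Lk))
    have heq : (fun z => fderiv ℝ u z y) =ᶠ[nhds x]
        (fun z => I (fderiv ℝ u z Li) + J (fderiv ℝ u z Lj) + K (fderiv ℝ u z Lk)) := by
      filter_upwards [hU.mem_nhds hx] with z hz
      exact htri z hz y
    have h1 := (hg.congr_of_eventuallyEq heq).unique (happly y)
    have h2 := congrArg (fun (T : (Fin m → ℍ[ℝ]) →L[ℝ] E) => T w) h1
    simpa using h2.symm
  have hsym : ∀ a b : Fin m → ℍ[ℝ], S a b = S b a := fun a b => hsymm.eq a b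
  have hterm : ∀ (n : Fin m) (t : Fin 4),
      fderiv ℝ (fun z => fderiv ℝ u z (stdBasisQ m n t)) x (stdBasisQ m n t)
        = S (stdBasisQ m n t) (stdBasisQ m n t) := by
    intro n t
    rw [(happly (stdBasisQ m n t)).fderiv]
    rfl
  calc (∑ n : Fin m, ∑ t : Fin 4,
        fderiv ℝ (fun z => fderiv ℝ u z (stdBasisQ m n t)) x (stdBasisQ m n t))
      = ∑ n : Fin m, ∑ t : Fin 4,
          (I (S (stdBasisQ m n t) (fun k => Quat.i * stdBasisQ m n t k))
            + J (S (stdBasisQ m n t) (fun k => Quat.j * stdBasisQ m n t k))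
            + K (S (stdBasisQ m n t) (fun k => Quat.k * stdBasisQ m n t k))) := by
        refine Finset.sum_congr rfl fun n _ => Finset.sum_congr rfl fun t _ => ?_
        rw [hterm n t, hkey (stdBasisQ m n t) (stdBasisQ m n t)]
    _ = 0 := by
        rw [Finset.sum_eq_zero]
        intro n _
        rw [Fin.sum_univ_four]
        simp only [stdBasisQ, single_mul_aux, qi0, qi1, qi2, qi3, qj0, qj1, qj2, qj3,
          qk0, qk1, qk2, qk3, single_neg_aux, map_neg]
        rw [hsym (Pi.single n (quatUnit 0)) (Pi.single n (quatUnit 1)),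
          hsym (Pi.single n (quatUnit 2)) (Pi.single n (quatUnit 3)),
          hsym (Pi.single n (quatUnit 0)) (Pi.single n (quatUnit 2)),
          hsym (Pi.single n (quatUnit 1)) (Pi.single n (quatUnit 3)),
          hsym (Pi.single n (quatUnit 0)) (Pi.single n (quatUnit 3)),
          hsym (Pi.single n (quatUnit 1)) (Pi.single n (quatUnit 2))]
        abel
end

section
/- Let n ≥ 2, let μ be a finite Borel measure on ℝⁿ with total mass μ(ℝⁿ) ≤ Λ, let ε₀ > 0, δ₀ > 0, and let S ⊆ ℝⁿ be a set such that μ(B_δ(x)) ≥ ε₀ δ^{n−2} for every x ∈ S and every δ ∈ (0, δ₀). Then for every δ ∈ (0, δ₀) the Lebesgue measure of the δ-neighbourhood {y ∈ ℝⁿ : dist(y, S) < δ} is at most C(n) (Λ/ε₀) δ², where C(n) depends only on n. (The refinement of the covering argument bounding the 2-codimensional Minkowski content of the blow-up set.) -/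
open MeasureTheory
open scoped ENNReal

/-- under the same lower density bound as in the covering argument, the
`δ`-neighbourhood of `S` has Lebesgue measure at most `C(n) (Λ/ε₀) δ²` for all `δ ∈ (0, δ₀)`
(bound on the 2-codimensional Minkowski content of the blow-up set). -/
theorem stmt13 (n : ℕ) (hn : 2 ≤ n) :
    ∃ C : ℝ≥0∞, C ≠ ⊤ ∧
      ∀ (μ : Measure (EuclideanSpace ℝ (Fin n))) (Λ ε₀ δ₀ : ℝ)
        (S : Set (EuclideanSpace ℝ (Fin n))),
        IsFiniteMeasure μ →
        μ Set.univ ≤ ENNReal.ofReal Λ →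
        0 < ε₀ → 0 < δ₀ →
        (∀ x ∈ S, ∀ δ : ℝ, 0 < δ → δ < δ₀ →
          ENNReal.ofReal (ε₀ * δ ^ (n - 2)) ≤ μ (Metric.ball x δ)) →
        ∀ δ : ℝ, 0 < δ → δ < δ₀ →
          volume (Metric.thickening δ S)
            ≤ C * (ENNReal.ofReal Λ / ENNReal.ofReal ε₀) * ENNReal.ofReal (δ ^ 2) := by
  classical
  set E := EuclideanSpace ℝ (Fin n)
  refine ⟨ENNReal.ofReal ((2 : ℝ) ^ n) * volume (Metric.ball (0 : E) 1), ?_, ?_⟩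
  · exact ENNReal.mul_ne_top ENNReal.ofReal_ne_top
      (measure_ball_lt_top).ne
  intro μ Λ ε₀ δ₀ S _ hΛ hε₀ hδ₀ hS δ hδ hδδ₀
  have hδ0 : (0:ℝ) ≤ δ := hδ.le
  -- the constant `c = ε₀ δ^{n-2}`
  set c : ℝ≥0∞ := ENNReal.ofReal (ε₀ * δ ^ (n - 2)) with hc
  have hcpos : 0 < c := by
    apply ENNReal.ofReal_pos.2
    positivity
  have hcne : c ≠ 0 := hcpos.ne'
  have hcnt : c ≠ ⊤ := ENNReal.ofReal_ne_top
  set T := Metric.thickening δ S with hT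
  set f : E → ℝ≥0∞ := fun y => μ (Metric.ball y (2 * δ)) with hf
  -- pointwise lower bound on the thickening
  have hlow : ∀ y ∈ T, c ≤ f y := by
    intro y hy
    obtain ⟨x, hxS, hxy⟩ := Metric.mem_thickening_iff.1 hy
    have hsub : Metric.ball x δ ⊆ Metric.ball y (2 * δ) := by
      intro z hz
      have hz' : dist z x < δ := Metric.mem_ball.1 hz
      have : dist z y ≤ dist z x + dist x y := dist_triangle z x y
      have hxy' : dist x y < δ := by rwa [dist_comm] at hxy
      refine Metric.mem_ball.2 ?_
      linarith
    exact le_trans (hS x hxS δ hδ hδδ₀) (measure_mono hsub)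
  -- step 1 : c * vol T ≤ ∫ f
  have step1 : c * volume T ≤ ∫⁻ y, f y := by
    have hTm : MeasurableSet T := Metric.isOpen_thickening.measurableSet
    have : (∫⁻ y, T.indicator (fun _ => c) y) = c * volume T := by
      rw [lintegral_indicator hTm]
      simp
    rw [← this]
    refine lintegral_mono fun y => ?_
    by_cases hy : y ∈ T
    · simpa [Set.indicator_of_mem hy] using hlow y hy
    · simp [Set.indicator_of_notMem hy]
  -- step 2 : Fubini computes ∫ f
  have step2 : (∫⁻ y, f y) = μ Set.univ * volume (Metric.ball (0 : E) (2 * δ)) := by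
    have hmeas : MeasurableSet {p : E × E | dist p.2 p.1 < 2 * δ} := by
      have : IsOpen {p : E × E | dist p.2 p.1 < 2 * δ} :=
        isOpen_lt (continuous_dist.comp (continuous_snd.prodMk continuous_fst))
          continuous_const
      exact this.measurableSet
    have key : ∀ y : E, f y = ∫⁻ x, {p : E × E | dist p.2 p.1 < 2 * δ}.indicator 1 (y, x) ∂μ := by
      intro y
      show μ (Metric.ball y (2 * δ)) = _
      have hb : (Metric.ball y (2 * δ)) = {x : E | dist x y < 2 * δ} := by
        ext x; simp [Metric.mem_ball]
      rw [hb, ← lintegral_indicator_one (by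
        have : IsOpen {x : E | dist x y < 2 * δ} :=
          isOpen_lt (continuous_dist.comp (continuous_id.prodMk continuous_const))
            continuous_const
        exact this.measurableSet)]
      rfl
    calc (∫⁻ y, f y)
        = ∫⁻ y, ∫⁻ x, {p : E × E | dist p.2 p.1 < 2 * δ}.indicator 1 (y, x) ∂μ ∂volume := by
          simp_rw [key]
      _ = ∫⁻ x, ∫⁻ y, {p : E × E | dist p.2 p.1 < 2 * δ}.indicator 1 (y, x) ∂volume ∂μ := by
          apply lintegral_lintegral_swap
          exact ((measurable_const.indicator hmeas).aemeasurable)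
      _ = ∫⁻ x, volume (Metric.ball x (2 * δ)) ∂μ := by
          refine lintegral_congr fun x => ?_
          have hs : Metric.ball x (2 * δ) = {y : E | dist y x < 2 * δ} := by
            ext y; simp [Metric.mem_ball]; exact Iff.rfl
          have hmeas2 : MeasurableSet {y : E | dist y x < 2 * δ} :=
            (isOpen_lt (continuous_dist.comp (continuous_id.prodMk continuous_const))
              continuous_const).measurableSet
          rw [hs, ← lintegral_indicator_one hmeas2]
          refine lintegral_congr fun z => ?_
          simp [Set.indicator_apply, dist_comm]
      _ = ∫⁻ x, volume (Metric.ball (0 : E) (2 * δ)) ∂μ := by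
          refine lintegral_congr fun x => ?_
          exact Measure.addHaar_ball_center volume x (2 * δ)
      _ = μ Set.univ * volume (Metric.ball (0 : E) (2 * δ)) := by
          rw [lintegral_const, mul_comm]
  -- volume of the ball of radius 2δ
  have hball : volume (Metric.ball (0 : E) (2 * δ))
      = ENNReal.ofReal ((2 * δ) ^ n) * volume (Metric.ball (0 : E) 1) := by
    haveI : Nontrivial (Fin n) := Fin.nontrivial_iff_two_le.mpr hn
    haveI : Nontrivial E := inferInstanceAs (Nontrivial (EuclideanSpace ℝ (Fin n)))
    have h := Measure.addHaar_ball (volume : Measure E) (0 : E) (by positivity : (0:ℝ) ≤ 2 * δ)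
    rw [h]
    congr 2
    simp [E, finrank_euclideanSpace_fin]
  -- combine
  have main : volume T * c ≤
      (ENNReal.ofReal ((2:ℝ)^n) * volume (Metric.ball (0 : E) 1) *
        (ENNReal.ofReal Λ / ENNReal.ofReal ε₀) * ENNReal.ofReal (δ ^ 2)) * c := by
    rw [mul_comm (volume T) c]
    refine step1.trans ?_
    rw [step2, hball]
    have hεne : ENNReal.ofReal ε₀ ≠ 0 := (ENNReal.ofReal_pos.2 hε₀).ne'
    have hεnt : ENNReal.ofReal ε₀ ≠ ⊤ := ENNReal.ofReal_ne_top
    have hcancel : ENNReal.ofReal Λ / ENNReal.ofReal ε₀ * ENNReal.ofReal ε₀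
        = ENNReal.ofReal Λ := ENNReal.div_mul_cancel hεne hεnt
    have hreal : (2 * δ) ^ n = 2 ^ n * (δ ^ 2 * δ ^ (n - 2)) := by
      rw [mul_pow, ← pow_add, Nat.add_sub_cancel' hn]
    calc μ Set.univ * (ENNReal.ofReal ((2 * δ) ^ n) * volume (Metric.ball (0 : E) 1))
        ≤ ENNReal.ofReal Λ * (ENNReal.ofReal ((2 * δ) ^ n) * volume (Metric.ball (0 : E) 1)) := by
          gcongr
      _ = (ENNReal.ofReal ((2:ℝ)^n) * volume (Metric.ball (0 : E) 1) *
            (ENNReal.ofReal Λ / ENNReal.ofReal ε₀) * ENNReal.ofReal (δ ^ 2)) * c := by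
          rw [hc, hreal]
          rw [show ε₀ * δ ^ (n-2) = ε₀ * δ ^ (n-2) from rfl]
          rw [ENNReal.ofReal_mul (by positivity : (0:ℝ) ≤ (2:ℝ)^n),
            ENNReal.ofReal_mul (by positivity : (0:ℝ) ≤ δ^2),
            ENNReal.ofReal_mul hε₀.le]
          calc ENNReal.ofReal Λ *
              (ENNReal.ofReal ((2:ℝ)^n) * (ENNReal.ofReal (δ^2) * ENNReal.ofReal (δ^(n-2))) *
                volume (Metric.ball (0 : E) 1))
              = (ENNReal.ofReal ((2:ℝ)^n) * volume (Metric.ball (0 : E) 1) *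
                  (ENNReal.ofReal Λ / ENNReal.ofReal ε₀ * ENNReal.ofReal ε₀) *
                  ENNReal.ofReal (δ^2)) * ENNReal.ofReal (δ^(n-2)) := by
                rw [hcancel]; ring
            _ = _ := by ring
  exact (ENNReal.mul_le_mul_iff_left hcne hcnt).1 main
end

section
/- Let L : ℍ → W be an ℝ-linear map that is triholomorphic (L(x) = I(L(i·x)) + J(L(j·x)) + K(L(k·x)) for all x ∈ ℍ) and has rank at most 2. Then there exist a, b, c ∈ ℝ with a² + b² + c² = 1 such that L((a·i + b·j + c·k)·x) = −(a·I + b·J + c·K)(L(x)) for all x ∈ ℍ; i.e., every triholomorphic map of rank at most 2 is (q, −Q)-holomorphic for some unit imaginary quaternion q = a i + b j + c k and Q = a I + b J + c K. (The linear-algebra core of the proposition that each bubble is a holomorphic sphere for some complex structure on the target.) -/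
open scoped Quaternion RealInnerProductSpace

/-- If a linear map on the quaternions has rank at most 2, then any three vectors in its
range are linearly dependent. -/
lemma dep3_aux {W : Type*} [AddCommGroup W] [Module ℝ W] (L : ℍ[ℝ] →ₗ[ℝ] W)
    (hrank : LinearMap.rank L ≤ 2) (x y z : ℍ[ℝ]) :
    ∃ p q r : ℝ, ¬(p = 0 ∧ q = 0 ∧ r = 0) ∧ p • L x + q • L y + r • L z = 0 := by
  have hni : ¬ LinearIndependent ℝ ![L x, L y, L z] := by
    intro hli
    have hmem : ∀ m : Fin 3, ![L x, L y, L z] m ∈ LinearMap.range L := by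
      intro m; fin_cases m <;> exact ⟨_, rfl⟩
    set v' : Fin 3 → ↥(LinearMap.range L) := fun m => ⟨![L x, L y, L z] m, hmem m⟩ with hv'
    have hli' : LinearIndependent ℝ v' := by
      apply LinearIndependent.of_comp (LinearMap.range L).subtype
      convert hli
      rfl
    have hcard := hli'.cardinal_lift_le_rank
    rw [LinearMap.rank] at hrank
    have h2 := (Cardinal.lift_le.mpr hrank).trans' hcard
    simp [Cardinal.mk_fin] at h2
    norm_num at h2
  rw [Fintype.not_linearIndependent_iff] at hni
  obtain ⟨g, hsum, i, hi⟩ := hni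
  refine ⟨g 0, g 1, g 2, ?_, ?_⟩
  · rintro ⟨h0, h1, h2⟩; fin_cases i <;> simp_all
  · simpa [Fin.sum_univ_three] using hsum

@[simp] lemma Quat.i_re : Quat.i.re = 0 := rfl
@[simp] lemma Quat.i_imI : Quat.i.imI = 1 := rfl
@[simp] lemma Quat.i_imJ : Quat.i.imJ = 0 := rfl
@[simp] lemma Quat.i_imK : Quat.i.imK = 0 := rfl
@[simp] lemma Quat.j_re : Quat.j.re = 0 := rfl
@[simp] lemma Quat.j_imI : Quat.j.imI = 0 := rfl
@[simp] lemma Quat.j_imJ : Quat.j.imJ = 1 := rfl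
@[simp] lemma Quat.j_imK : Quat.j.imK = 0 := rfl
@[simp] lemma Quat.k_re : Quat.k.re = 0 := rfl
@[simp] lemma Quat.k_imI : Quat.k.imI = 0 := rfl
@[simp] lemma Quat.k_imJ : Quat.k.imJ = 0 := rfl
@[simp] lemma Quat.k_imK : Quat.k.imK = 1 := rfl

lemma quat_mul_ii : Quat.i * Quat.i = -1 := by ext <;> simp
lemma quat_mul_ji : Quat.j * Quat.i = -Quat.k := by ext <;> simp
lemma quat_mul_ki : Quat.k * Quat.i = Quat.j := by ext <;> simp
lemma quat_mul_ij : Quat.i * Quat.j = Quat.k := by ext <;> simp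
lemma quat_mul_jj : Quat.j * Quat.j = -1 := by ext <;> simp
lemma quat_mul_kj : Quat.k * Quat.j = -Quat.i := by ext <;> simp
lemma quat_mul_ik : Quat.i * Quat.k = -Quat.j := by ext <;> simp
lemma quat_mul_jk : Quat.j * Quat.k = Quat.i := by ext <;> simp
lemma quat_mul_kk : Quat.k * Quat.k = -1 := by ext <;> simp

set_option maxHeartbeats 1000000 in
/-- every triholomorphic linear map `L : ℍ → W` of rank at most `2` is
`(q, −Q)`-holomorphic for some unit imaginary quaternion `q = a i + b j + c k` and
`Q = a I + b J + c K`. -/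
theorem stmt17 {W : Type*} [NormedAddCommGroup W] [InnerProductSpace ℝ W]
    (I J K : W →ₗ[ℝ] W)
    (hIinner : ∀ v w : W, ⟪I v, I w⟫ = ⟪v, w⟫)
    (hJinner : ∀ v w : W, ⟪J v, J w⟫ = ⟪v, w⟫)
    (hKinner : ∀ v w : W, ⟪K v, K w⟫ = ⟪v, w⟫)
    (hII : I ∘ₗ I = -LinearMap.id) (hJJ : J ∘ₗ J = -LinearMap.id)
    (hKK : K ∘ₗ K = -LinearMap.id)
    (hIJ : I ∘ₗ J = K) (hJK : J ∘ₗ K = I) (hKI : K ∘ₗ I = J)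
    (L : ℍ[ℝ] →ₗ[ℝ] W)
    (htri : ∀ x : ℍ[ℝ],
      L x = I (L (Quat.i * x)) + J (L (Quat.j * x)) + K (L (Quat.k * x)))
    (hrank : LinearMap.rank L ≤ 2) :
    ∃ a b c : ℝ, a ^ 2 + b ^ 2 + c ^ 2 = 1 ∧
      ∀ x : ℍ[ℝ],
        L ((a • Quat.i + b • Quat.j + c • Quat.k) * x)
          = -((a • I + b • J + c • K) (L x)) := by
  -- elementwise versions of the quaternionic relations
  have hIIv : ∀ v, I (I v) = -v := fun v => by
    simpa using LinearMap.congr_fun hII v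
  have hJJv : ∀ v, J (J v) = -v := fun v => by
    simpa using LinearMap.congr_fun hJJ v
  have hKKv : ∀ v, K (K v) = -v := fun v => by
    simpa using LinearMap.congr_fun hKK v
  have hIJv : ∀ v, I (J v) = K v := fun v => LinearMap.congr_fun hIJ v
  have hJKv : ∀ v, J (K v) = I v := fun v => LinearMap.congr_fun hJK v
  have hKIv : ∀ v, K (I v) = J v := fun v => LinearMap.congr_fun hKI v
  have hKJv : ∀ v, K (J v) = -(I v) := fun v => by
    rw [← hIJv (J v), hJJv, map_neg]
  have hJIv : ∀ v, J (I v) = -(K v) := fun v => by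
    rw [← hKIv (I v), hIIv, map_neg]
  have hIKv : ∀ v, I (K v) = -(J v) := fun v => by
    rw [← hJKv (K v), hKKv, map_neg]
  -- the triholomorphy relations at the basis quaternions
  have R1 : L Quat.i + I (L 1) + J (L Quat.k) - K (L Quat.j) = 0 := by
    have h := htri Quat.i
    rw [quat_mul_ii, quat_mul_ji, quat_mul_ki, map_neg, map_neg, map_neg, map_neg] at h
    linear_combination (norm := module) h
  have R2 : L Quat.j + J (L 1) + K (L Quat.i) - I (L Quat.k) = 0 := by
    have h := htri Quat.j
    rw [quat_mul_ij, quat_mul_jj, quat_mul_kj, map_neg, map_neg, map_neg, map_neg] at h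
    linear_combination (norm := module) h
  have R3 : L Quat.k + K (L 1) + I (L Quat.j) - J (L Quat.i) = 0 := by
    have h := htri Quat.k
    rw [quat_mul_ik, quat_mul_jk, quat_mul_kk, map_neg, map_neg, map_neg, map_neg] at h
    linear_combination (norm := module) h
  -- a kernel element (p, q, r, 0)
  obtain ⟨p, q, r, hpqr, hZ⟩ := dep3_aux L hrank 1 Quat.i Quat.j
  have hZI := congrArg I hZ
  have hZJ := congrArg J hZ
  have hZK := congrArg K hZ
  simp only [map_add, map_smul, map_zero] at hZI hZJ hZK
  -- linear dependence of the three twisted images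
  obtain ⟨a, b, c, habc, hH⟩ := dep3_aux L hrank
    (-(q • (1:ℍ[ℝ])) + p • Quat.i + r • Quat.k)
    (-(r • (1:ℍ[ℝ])) + p • Quat.j - q • Quat.k)
    (-(r • Quat.i) + q • Quat.j + p • Quat.k)
  simp only [map_add, map_sub, map_neg, map_smul] at hH
  set u : W := a • I (L 1) + b • J (L 1) + c • K (L 1)
      + a • L Quat.i + b • L Quat.j + c • L Quat.k with hu
  have hP : p • u + q • I u + r • J u = 0 := by
    rw [hu]
    simp only [map_add, map_smul, map_neg, smul_neg, hIIv, hIJv, hIKv, hJIv, hJJv, hJKv]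
    linear_combination (norm := module) hH + a • hZI + b • hZJ + c • hZK
      + (-(c*q)) • R2 + (c*r) • R1 + (b*q - a*r) • R3
  have hPI := congrArg I hP
  have hPJ := congrArg J hP
  simp only [map_add, map_smul, map_zero, hIIv, hIJv, hJIv, hJJv] at hPI hPJ
  have hsq : (p^2 + q^2 + r^2) • u = 0 := by
    linear_combination (norm := module) p • hP - q • hPI - r • hPJ
  have hne : p^2 + q^2 + r^2 ≠ 0 := by
    intro h0
    have hp2 : p = 0 := by
      have : p^2 = 0 := by linarith [sq_nonneg p, sq_nonneg q, sq_nonneg r]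
      exact pow_eq_zero_iff two_ne_zero |>.mp this
    have hq2 : q = 0 := by
      have : q^2 = 0 := by linarith [sq_nonneg p, sq_nonneg q, sq_nonneg r]
      exact pow_eq_zero_iff two_ne_zero |>.mp this
    have hr2 : r = 0 := by
      have : r^2 = 0 := by linarith [sq_nonneg p, sq_nonneg q, sq_nonneg r]
      exact pow_eq_zero_iff two_ne_zero |>.mp this
    exact hpqr ⟨hp2, hq2, hr2⟩
  have hu0 : u = 0 := by
    rcases smul_eq_zero.mp hsq with h | h
    · exact absurd h hne
    · exact h
  have hG1 : a • I (L 1) + b • J (L 1) + c • K (L 1)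
      + a • L Quat.i + b • L Quat.j + c • L Quat.k = 0 := by rw [← hu]; exact hu0
  have hG1I := congrArg I hG1
  have hG1J := congrArg J hG1
  have hG1K := congrArg K hG1
  simp only [map_add, map_smul, map_zero, hIIv, hIJv, hIKv, hJIv, hJJv, hJKv,
    hKIv, hKJv, hKKv] at hG1I hG1J hG1K
  have hG2 : -(a • L 1) + c • L Quat.j - b • L Quat.k
      + a • I (L Quat.i) + b • J (L Quat.i) + c • K (L Quat.i) = 0 := by
    linear_combination (norm := module) hG1I + c • R2 + (-b) • R3
  have hG3 : -(b • L 1) - c • L Quat.i + a • L Quat.k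
      + a • I (L Quat.j) + b • J (L Quat.j) + c • K (L Quat.j) = 0 := by
    linear_combination (norm := module) hG1J + a • R3 + (-c) • R1
  have hG4 : -(c • L 1) + b • L Quat.i - a • L Quat.j
      + a • I (L Quat.k) + b • J (L Quat.k) + c • K (L Quat.k) = 0 := by
    linear_combination (norm := module) hG1K + b • R1 + (-a) • R2
  -- the unnormalized holomorphy
  have core : ∀ x : ℍ[ℝ], L ((a • Quat.i + b • Quat.j + c • Quat.k) * x)
      = -(a • I (L x) + b • J (L x) + c • K (L x)) := by
    intro x
    have hmul : (a • Quat.i + b • Quat.j + c • Quat.k) * x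
        = (-(a * x.imI) - b * x.imJ - c * x.imK) • (1:ℍ[ℝ])
          + (a * x.re + b * x.imK - c * x.imJ) • Quat.i
          + (b * x.re + c * x.imI - a * x.imK) • Quat.j
          + (c * x.re + a * x.imJ - b * x.imI) • Quat.k := by
      ext <;> simp <;> ring
    have hLx : L x = x.re • L 1 + x.imI • L Quat.i + x.imJ • L Quat.j + x.imK • L Quat.k := by
      have hxd : x = x.re • (1:ℍ[ℝ]) + x.imI • Quat.i + x.imJ • Quat.j + x.imK • Quat.k := by
        ext <;> simp
      conv_lhs => rw [hxd]
      simp only [map_add, map_smul]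
    rw [hmul, hLx]
    simp only [map_add, map_smul, map_sub, map_neg]
    linear_combination (norm := module) x.re • hG1 + x.imI • hG2 + x.imJ • hG3 + x.imK • hG4
  -- normalization
  have habcne : a^2 + b^2 + c^2 ≠ 0 := by
    intro h0
    have ha2 : a = 0 := by
      have : a^2 = 0 := by linarith [sq_nonneg a, sq_nonneg b, sq_nonneg c]
      exact pow_eq_zero_iff two_ne_zero |>.mp this
    have hb2 : b = 0 := by
      have : b^2 = 0 := by linarith [sq_nonneg a, sq_nonneg b, sq_nonneg c]
      exact pow_eq_zero_iff two_ne_zero |>.mp this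
    have hc2 : c = 0 := by
      have : c^2 = 0 := by linarith [sq_nonneg a, sq_nonneg b, sq_nonneg c]
      exact pow_eq_zero_iff two_ne_zero |>.mp this
    exact habc ⟨ha2, hb2, hc2⟩
  have habcpos : 0 < a^2 + b^2 + c^2 := lt_of_le_of_ne (by positivity) (Ne.symm habcne)
  set n : ℝ := Real.sqrt (a^2 + b^2 + c^2) with hn
  have hnpos : 0 < n := Real.sqrt_pos.mpr habcpos
  have hn2 : n^2 = a^2 + b^2 + c^2 := Real.sq_sqrt habcpos.le
  refine ⟨a / n, b / n, c / n, ?_, ?_⟩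
  · field_simp
    linarith [hn2]
  · intro x
    have h1 : (a / n) • Quat.i + (b / n) • Quat.j + (c / n) • Quat.k
        = n⁻¹ • (a • Quat.i + b • Quat.j + c • Quat.k) := by
      match_scalars <;> field_simp
    rw [h1, smul_mul_assoc, map_smul, core x]
    simp only [LinearMap.add_apply, LinearMap.smul_apply]
    match_scalars <;> field_simp
end
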